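/- Let N ≥ 1 be an integer, let 0 < p < 1, let 0 < ε < 1, and set μ = Np. Let Δ be any real number with Δ ≥ sqrt(4·N·max{p, (4/N)·ln(2/ε)}·ln(2/ε)). Then the binomial tail satisfies ∑_{k = 0,…,N with |k − μ| > Δ} B(k; N, p) < ε. -/

import Mathlib

set_option maxHeartbeats 1000000

open Finset Real

lemma exp_quad {s : ℝ} (hs : |s| ≤ 1) : Real.exp s - 1 - s ≤ (3/4) * s^2 := by
  have h := Real.exp_bound hs (by norm_num : 0 < 2)
  have h2 : ∑ i ∈ Finset.range 2, s ^ i / (Nat.factorial i) = 1 + s := by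
    simp [Finset.sum_range_succ]
  rw [h2] at h
  have := abs_le.mp h
  have hb : |s| ^ 2 * ((2:ℕ).succ / ((Nat.factorial 2 : ℝ) * 2)) = (3/4) * s^2 := by
    rw [sq_abs]; norm_num [Nat.factorial]; ring
  nlinarith [this.2, sq_abs s]

lemma chernoff_aux (N : ℕ) (p : ℝ) (hp0 : 0 ≤ p) (hp1 : p ≤ 1) (t c : ℝ)
    (F : Finset ℕ) (hF : F ⊆ Finset.range (N+1))
    (hind : ∀ k ∈ F, 0 ≤ t * k - c) :
    ∑ k ∈ F, (N.choose k : ℝ) * p ^ k * (1 - p) ^ (N - k)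
      ≤ Real.exp ((N : ℝ) * p * (Real.exp t - 1) - c) := by
  have hB : ∀ k : ℕ, 0 ≤ (N.choose k : ℝ) * p ^ k * (1 - p) ^ (N - k) := by
    intro k
    have : (0:ℝ) ≤ 1 - p := by linarith
    positivity
  have step1 : ∑ k ∈ F, (N.choose k : ℝ) * p ^ k * (1 - p) ^ (N - k)
      ≤ ∑ k ∈ F, Real.exp (t * k - c) * ((N.choose k : ℝ) * p ^ k * (1 - p) ^ (N - k)) := by
    apply Finset.sum_le_sum
    intro k hk
    have h1 : (1:ℝ) ≤ Real.exp (t * k - c) := Real.one_le_exp (hind k hk)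
    nlinarith [hB k]
  have step2 : ∑ k ∈ F, Real.exp (t * k - c) * ((N.choose k : ℝ) * p ^ k * (1 - p) ^ (N - k))
      ≤ ∑ k ∈ Finset.range (N+1), Real.exp (t * k - c) * ((N.choose k : ℝ) * p ^ k * (1 - p) ^ (N - k)) := by
    apply Finset.sum_le_sum_of_subset_of_nonneg hF
    intro k _ _
    exact mul_nonneg (Real.exp_nonneg _) (hB k)
  have step3 : ∑ k ∈ Finset.range (N+1), Real.exp (t * k - c) * ((N.choose k : ℝ) * p ^ k * (1 - p) ^ (N - k))
      = Real.exp (-c) * (p * Real.exp t + (1 - p)) ^ N := by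
    rw [add_pow, Finset.mul_sum]
    apply Finset.sum_congr rfl
    intro k _
    rw [sub_eq_add_neg (t * k), Real.exp_add, mul_comm t (k:ℝ), Real.exp_nat_mul, mul_pow]
    ring
  have hbase : (0:ℝ) ≤ p * Real.exp t + (1 - p) := by
    have := Real.exp_nonneg t
    nlinarith
  have step4 : (p * Real.exp t + (1 - p)) ^ N ≤ Real.exp ((N:ℝ) * (p * (Real.exp t - 1))) := by
    have h1 : p * Real.exp t + (1 - p) ≤ Real.exp (p * (Real.exp t - 1)) := by
      have := Real.add_one_le_exp (p * (Real.exp t - 1))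
      linarith
    calc (p * Real.exp t + (1 - p)) ^ N ≤ (Real.exp (p * (Real.exp t - 1))) ^ N :=
          pow_le_pow_left₀ hbase h1 N
      _ = Real.exp ((N:ℝ) * (p * (Real.exp t - 1))) := (Real.exp_nat_mul _ N).symm
  calc ∑ k ∈ F, (N.choose k : ℝ) * p ^ k * (1 - p) ^ (N - k)
      ≤ Real.exp (-c) * (p * Real.exp t + (1 - p)) ^ N := by
        rw [← step3]; exact le_trans step1 step2
    _ ≤ Real.exp (-c) * Real.exp ((N:ℝ) * (p * (Real.exp t - 1))) := by
        apply mul_le_mul_of_nonneg_left step4 (Real.exp_nonneg _)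
    _ = Real.exp ((N : ℝ) * p * (Real.exp t - 1) - c) := by
        rw [← Real.exp_add]; ring_nf

-- choice of t : exists t ∈ [0,1] with (3/4) a t² - t Δ < -L
lemma choose_t {a L Δ : ℝ} (ha : 0 < a) (hL : 0 < L) (h1 : 4 * a * L ≤ Δ^2) (h2 : 4 * L ≤ Δ) :
    ∃ t : ℝ, 0 ≤ t ∧ t ≤ 1 ∧ (3/4) * a * t^2 - t * Δ < -L := by
  have hΔ0 : 0 < Δ := by linarith
  by_cases hc : 2 * Δ ≤ 3 * a
  · refine ⟨2 * Δ / (3 * a), by positivity, ?_, ?_⟩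
    · rw [div_le_one (by linarith)]; linarith
    · have key : (3/4) * a * (2 * Δ / (3 * a))^2 - (2 * Δ / (3 * a)) * Δ = -(Δ^2 / (3 * a)) := by
        field_simp; ring
      rw [key]
      have : 4 * L / 3 ≤ Δ^2 / (3 * a) := by
        rw [div_le_div_iff₀ (by norm_num) (by linarith)]
        nlinarith
      linarith
  · refine ⟨1, by norm_num, le_refl 1, ?_⟩
    push_neg at hc
    nlinarith

theorem binomial_tail_lt_of_sqrt_le_delta
    (N : ℕ) (hN : 1 ≤ N) (p ε Δ : ℝ)
    (hp0 : 0 < p) (hp1 : p < 1) (hε0 : 0 < ε) (hε1 : ε < 1)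
    (hΔ : Real.sqrt (4 * N * max p (4 / N * Real.log (2 / ε)) * Real.log (2 / ε)) ≤ Δ) :
    ∑ k ∈ (Finset.range (N + 1)).filter (fun k : ℕ => Δ < |(k : ℝ) - N * p|),
      (N.choose k : ℝ) * p ^ k * (1 - p) ^ (N - k) < ε := by
  classical
  set L := Real.log (2 / ε) with hLdef
  have hN0 : (0:ℝ) < N := by exact_mod_cast hN
  have hL : 0 < L := Real.log_pos (by rw [lt_div_iff₀ hε0]; linarith)
  set a := (N : ℝ) * p with hadef
  have ha : 0 < a := by positivity
  -- extract Δ facts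
  have hmax1 : p ≤ max p (4 / N * L) := le_max_left _ _
  have hmax2 : 4 / N * L ≤ max p (4 / N * L) := le_max_right _ _
  have hin : 0 ≤ 4 * N * max p (4 / N * L) * L := by
    have : 0 < max p (4 / N * L) := lt_of_lt_of_le hp0 hmax1
    positivity
  have hΔ0 : 0 ≤ Δ := le_trans (Real.sqrt_nonneg _) hΔ
  have hΔsq : 4 * (N:ℝ) * max p (4 / N * L) * L ≤ Δ^2 := by
    calc 4 * (N:ℝ) * max p (4 / N * L) * L
        = Real.sqrt (4 * N * max p (4 / N * L) * L) ^ 2 := (Real.sq_sqrt hin).symm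
      _ ≤ Δ^2 := pow_le_pow_left₀ (Real.sqrt_nonneg _) hΔ 2
  have hfact1 : 4 * a * L ≤ Δ^2 := by
    have h : 4 * (N:ℝ) * p * L ≤ 4 * N * max p (4 / N * L) * L := by
      gcongr
    have : 4 * a * L = 4 * (N:ℝ) * p * L := by rw [hadef]; ring
    linarith
  have hfact2 : 4 * L ≤ Δ := by
    have h16 : 16 * L^2 ≤ Δ^2 := by
      have h : 4 * (N:ℝ) * (4 / N * L) * L ≤ 4 * N * max p (4 / N * L) * L := by
        gcongr
      have heq : 4 * (N:ℝ) * (4 / N * L) * L = 16 * L^2 := by field_simp; ring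
      linarith
    nlinarith [sq_nonneg (Δ - 4*L)]
  -- split the sum
  have hsplit : (Finset.range (N + 1)).filter (fun k : ℕ => Δ < |(k : ℝ) - N * p|)
      = (Finset.range (N + 1)).filter (fun k : ℕ => Δ < (k : ℝ) - N * p)
        ∪ (Finset.range (N + 1)).filter (fun k : ℕ => Δ < -((k : ℝ) - N * p)) := by
    rw [← Finset.filter_or]
    apply Finset.filter_congr
    intro k _
    simp [lt_abs]
  have hdisj : Disjoint ((Finset.range (N + 1)).filter (fun k : ℕ => Δ < (k : ℝ) - N * p))
      ((Finset.range (N + 1)).filter (fun k : ℕ => Δ < -((k : ℝ) - N * p))) := by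
    rw [Finset.disjoint_filter]
    intro k _ h1 h2
    linarith
  rw [hsplit, Finset.sum_union hdisj]
  -- choice of t
  obtain ⟨t, ht0, ht1, htkey⟩ := choose_t ha hL hfact1 hfact2
  have hquad1 : Real.exp t - 1 - t ≤ (3/4) * t^2 := exp_quad (by rw [abs_of_nonneg ht0]; exact ht1)
  have hquad2 : Real.exp (-t) - 1 + t ≤ (3/4) * t^2 := by
    have := exp_quad (s := -t) (by rw [abs_neg, abs_of_nonneg ht0]; exact ht1)
    nlinarith
  have hexpL : Real.exp (-L) = ε / 2 := by
    rw [hLdef, ← Real.log_inv, Real.exp_log (by positivity)]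
    field_simp
  -- upper tail
  have hup : ∑ k ∈ (Finset.range (N + 1)).filter (fun k : ℕ => Δ < (k : ℝ) - N * p),
      (N.choose k : ℝ) * p ^ k * (1 - p) ^ (N - k) < ε / 2 := by
    have hb := chernoff_aux N p hp0.le hp1.le t (t * (a + Δ))
      ((Finset.range (N + 1)).filter (fun k : ℕ => Δ < (k : ℝ) - N * p))
      (Finset.filter_subset _ _) ?_
    · refine lt_of_le_of_lt hb ?_
      rw [← hexpL]
      apply Real.exp_lt_exp.mpr
      have : (N:ℝ) * p * (Real.exp t - 1) - t * (a + Δ) = a * (Real.exp t - 1 - t) - t * Δ := by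
        rw [hadef]; ring
      rw [this]
      have hmul := mul_le_mul_of_nonneg_left hquad1 ha.le
      nlinarith
    · intro k hk
      rw [Finset.mem_filter] at hk
      have : 0 ≤ t * ((k:ℝ) - a - Δ) :=
        mul_nonneg ht0 (by rw [hadef]; linarith [hk.2])
      nlinarith
  -- lower tail
  have hlow : ∑ k ∈ (Finset.range (N + 1)).filter (fun k : ℕ => Δ < -((k : ℝ) - N * p)),
      (N.choose k : ℝ) * p ^ k * (1 - p) ^ (N - k) < ε / 2 := by
    have hb := chernoff_aux N p hp0.le hp1.le (-t) ((-t) * (a - Δ))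
      ((Finset.range (N + 1)).filter (fun k : ℕ => Δ < -((k : ℝ) - N * p)))
      (Finset.filter_subset _ _) ?_
    · refine lt_of_le_of_lt hb ?_
      rw [← hexpL]
      apply Real.exp_lt_exp.mpr
      have : (N:ℝ) * p * (Real.exp (-t) - 1) - (-t) * (a - Δ) = a * (Real.exp (-t) - 1 + t) - t * Δ := by
        rw [hadef]; ring
      rw [this]
      have hmul := mul_le_mul_of_nonneg_left hquad2 ha.le
      nlinarith
    · intro k hk
      rw [Finset.mem_filter] at hk
      have : 0 ≤ t * (a - Δ - (k:ℝ)) :=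
        mul_nonneg ht0 (by rw [hadef]; linarith [hk.2])
      nlinarith
  linarith
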